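/- Let G be a connected threshold graph with c ≥ 3 type-1 vertices and BZP sequence b₁, …, b_z (z ≥ 1, 1 ≤ b_i ≤ c−1); set S' = ∑ b_i and F₁ = ∑ b_i². Then the spectral radius ρ of G satisfies (ρ − c + 1)·(ρ(ρ+1) − S') ≤ F₁; equivalently, 1 + ρ is at most the greatest real root of x³ − (c+1)x² + (c − S')x + (cS' − F₁). -/

import Mathlib

open Matrix Finset

private lemma exists_eigvec {n : Type*} [Fintype n] [DecidableEq n] (A : Matrix n n ℝ) {ρ : ℝ}
    (h : ρ ∈ spectrum ℝ A) : ∃ v : n → ℝ, v ≠ 0 ∧ A.mulVec v = ρ • v := by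
  rw [← AlgEquiv.spectrum_eq (Matrix.toLinAlgEquiv' (R := ℝ) (n := n)),
    ← Module.End.hasEigenvalue_iff_mem_spectrum] at h
  obtain ⟨v, hv⟩ := h.exists_hasEigenvector
  refine ⟨v, hv.2, ?_⟩
  have := hv.apply_eq_smul
  simpa [Matrix.toLinAlgEquiv'_apply] using this

private lemma rayleigh_aux {n : Type*} [Fintype n] [DecidableEq n] {A : Matrix n n ℝ}
    (hA : A.IsHermitian) {ρ : ℝ} (hρ : ∀ μ ∈ spectrum ℝ A, |μ| ≤ ρ) (x : n → ℝ) :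
    x ⬝ᵥ A.mulVec x ≤ ρ * (x ⬝ᵥ x) := by
  set U : Matrix n n ℝ := (hA.eigenvectorUnitary : Matrix n n ℝ) with hUdef
  have hU : U * star U = 1 := (Matrix.mem_unitaryGroup_iff).mp hA.eigenvectorUnitary.2
  have hxU : ∀ w : n → ℝ, x ⬝ᵥ U.mulVec w = (star U *ᵥ x) ⬝ᵥ w := by
    intro w
    rw [dotProduct_mulVec, ← mulVec_transpose]
    congr 1
  have h1 : x ⬝ᵥ A.mulVec x = ∑ i, hA.eigenvalues i * (star U *ᵥ x) i ^ 2 := by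
    conv_lhs => rw [hA.spectral_theorem, Unitary.conjStarAlgAut_apply]
    rw [← Matrix.mulVec_mulVec, ← Matrix.mulVec_mulVec, hxU]
    have : (Matrix.diagonal (RCLike.ofReal ∘ hA.eigenvalues) : Matrix n n ℝ).mulVec (star U *ᵥ x)
        = fun i => hA.eigenvalues i * (star U *ᵥ x) i := by
      ext i; rw [Matrix.mulVec_diagonal]; simp
    rw [this, dotProduct]
    exact Finset.sum_congr rfl fun i _ => by ring
  have h2 : x ⬝ᵥ x = ∑ i, (star U *ᵥ x) i ^ 2 := by
    have h : (star U *ᵥ x) ⬝ᵥ (star U *ᵥ x) = x ⬝ᵥ x := by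
      rw [← hxU, Matrix.mulVec_mulVec, hU, Matrix.one_mulVec]
    rw [← h, dotProduct]
    exact Finset.sum_congr rfl fun i _ => (sq ((star U *ᵥ x) i)).symm
  rw [h1, h2, Finset.mul_sum]
  refine Finset.sum_le_sum fun i _ => ?_
  have hle : hA.eigenvalues i ≤ ρ :=
    le_trans (le_abs_self _) (hρ _ (hA.eigenvalues_mem_spectrum_real i))
  nlinarith [sq_nonneg ((star U *ᵥ x) i)]

/-- A connected threshold graph with `c ≥ 3` type-1 vertices and BZP
sequence `b₁, …, b_z` (`z ≥ 1`, `1 ≤ bᵢ ≤ c−1`) has spectral radius `ρ` satisfying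
`(ρ − c + 1)·(ρ(ρ+1) − S') ≤ F₁`, where `S' = ∑ bᵢ` and `F₁ = ∑ bᵢ²`; equivalently,
`1 + ρ` is at most the greatest real root of `x³ − (c+1)x² + (c−S')x + (cS' − F₁)`. -/
theorem threshold_upper_bound (c z : ℕ) (hc : 3 ≤ c) (hz : 1 ≤ z)
    (hn : 4 ≤ c + z)
    (b : Fin z → ℕ) (hb : ∀ i, 1 ≤ b i ∧ b i ≤ c - 1)
    (hmono : ∀ i j : Fin z, i ≤ j → b j ≤ b i)
    (G : SimpleGraph (Fin (c + z))) [DecidableRel G.Adj]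
    (hG : ∀ u v : Fin (c + z), G.Adj u v ↔ u ≠ v ∧
      ((u.1 < c ∧ v.1 < c) ∨
       (u.1 < c ∧ c ≤ v.1 ∧ u.1 < b ⟨v.1 - c, by have := v.isLt; omega⟩) ∨
       (v.1 < c ∧ c ≤ u.1 ∧ v.1 < b ⟨u.1 - c, by have := u.isLt; omega⟩)))
    (hconn : G.Connected)
    (ρ : ℝ) (hρ₁ : ρ ∈ spectrum ℝ (G.adjMatrix ℝ))
    (hρ₂ : ∀ μ ∈ spectrum ℝ (G.adjMatrix ℝ), |μ| ≤ ρ) :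
    (ρ - c + 1) * (ρ * (ρ + 1) - ∑ i, (b i : ℝ)) ≤ ∑ i, (b i : ℝ) ^ 2 := by
  classical
  set A : Matrix (Fin (c + z)) (Fin (c + z)) ℝ := G.adjMatrix ℝ with hAdef
  have hρ0 : 0 ≤ ρ := le_trans (abs_nonneg ρ) (hρ₂ ρ hρ₁)
  have hHerm : A.IsHermitian := by
    rw [Matrix.IsHermitian, Matrix.conjTranspose_eq_transpose_of_trivial]
    exact G.transpose_adjMatrix
  -- adjacency facts
  have hadj11 : ∀ i i' : Fin c, i ≠ i' → G.Adj (Fin.castAdd z i) (Fin.castAdd z i') := by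
    intro i i' h
    rw [hG]
    constructor
    · simp only [ne_eq, Fin.ext_iff, Fin.coe_castAdd]
      exact fun hh => h (Fin.ext hh)
    · exact Or.inl ⟨by simpa using i.isLt, by simpa using i'.isLt⟩
  have hbeq : ∀ (j : Fin z) (h : c + (j : ℕ) - c < z), (⟨c + (j : ℕ) - c, h⟩ : Fin z) = j :=
    fun j h => Fin.ext (show c + (j : ℕ) - c = (j : ℕ) by omega)
  have hadj10 : ∀ (i : Fin c) (j : Fin z),
      G.Adj (Fin.castAdd z i) (Fin.natAdd c j) ↔ (i : ℕ) < b j := by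
    intro i j
    rw [hG]
    simp only [Fin.coe_castAdd, Fin.coe_natAdd]
    rw [hbeq j]
    constructor
    · rintro ⟨hne, h | h | h⟩
      · omega
      · exact h.2.2
      · omega
    · intro h
      refine ⟨?_, Or.inr (Or.inl ⟨i.isLt, by omega, h⟩)⟩
      simp only [ne_eq, Fin.ext_iff, Fin.coe_castAdd, Fin.coe_natAdd]
      omega
  have hadj00 : ∀ j j' : Fin z, ¬ G.Adj (Fin.natAdd c j) (Fin.natAdd c j') := by
    intro j j' h
    rw [hG] at h
    obtain ⟨-, h | h | h⟩ := h <;> simp only [Fin.coe_natAdd] at h <;> omega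
  -- entries
  have hA11 : ∀ i i' : Fin c, A (Fin.castAdd z i) (Fin.castAdd z i')
      = if i = i' then 0 else 1 := by
    intro i i'
    by_cases h : i = i'
    · subst h; simp [hAdef]
    · simp [hAdef, SimpleGraph.adjMatrix_apply, hadj11 i i' h, h]
  have hA10 : ∀ (i : Fin c) (j : Fin z), A (Fin.castAdd z i) (Fin.natAdd c j)
      = if (i : ℕ) < b j then 1 else 0 := by
    intro i j
    by_cases h : (i : ℕ) < b j
    · simp [hAdef, SimpleGraph.adjMatrix_apply, (hadj10 i j).mpr h, h]
    · have hna : ¬ G.Adj (Fin.castAdd z i) (Fin.natAdd c j) := fun hh => h ((hadj10 i j).mp hh)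
      simp [hAdef, SimpleGraph.adjMatrix_apply, h, hna]
  have hsym : ∀ k l, A l k = A k l := fun k l => congrFun (congrFun G.transpose_adjMatrix k) l
  have hA01 : ∀ (j : Fin z) (i : Fin c), A (Fin.natAdd c j) (Fin.castAdd z i)
      = if (i : ℕ) < b j then 1 else 0 := by
    intro j i
    rw [← hA10 i j]
    exact hsym _ _
  have hA00 : ∀ j j' : Fin z, A (Fin.natAdd c j) (Fin.natAdd c j') = 0 := by
    intro j j'
    simp [hAdef, SimpleGraph.adjMatrix_apply, hadj00 j j']
  have hAnn : ∀ k l, (0:ℝ) ≤ A k l := by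
    intro k l
    simp only [hAdef, SimpleGraph.adjMatrix_apply]
    split <;> norm_num
  have hmv : ∀ (f : Fin (c + z) → ℝ) (k), A.mulVec f k = ∑ l, A k l * f l := fun f k => rfl
  -- eigenvector
  obtain ⟨v, hv0, hAv⟩ := exists_eigvec A hρ₁
  set w : Fin (c + z) → ℝ := fun l => |v l| with hwdef
  have hwnn : ∀ k, 0 ≤ w k := fun k => abs_nonneg _
  have hw : ∀ k, ρ * w k ≤ A.mulVec w k := by
    intro k
    have h1 : A.mulVec v k = ρ * v k := by rw [hAv]; rfl
    calc ρ * w k = |ρ * v k| := by rw [abs_mul, abs_of_nonneg hρ0]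
    _ = |∑ l, A k l * v l| := by rw [← h1, hmv]
    _ ≤ ∑ l, |A k l * v l| := Finset.abs_sum_le_sum_abs _ _
    _ = ∑ l, A k l * w l := Finset.sum_congr rfl fun l _ => by
          rw [abs_mul, abs_of_nonneg (hAnn k l)]
    _ = A.mulVec w k := (hmv w k).symm
  set u : Fin c → ℝ := fun i => w (Fin.castAdd z i) with hudef
  set t : Fin z → ℝ := fun j => w (Fin.natAdd c j) with htdef
  set T : ℝ := ∑ i, u i with hTdef
  have hunn : ∀ i, 0 ≤ u i := fun i => hwnn _
  have htnn : ∀ j, 0 ≤ t j := fun j => hwnn _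
  -- sum helpers
  have hsum1 : ∀ i : Fin c, ∑ i', (if i = i' then (0:ℝ) else 1) * u i' = T - u i := by
    intro i
    have : ∀ i' : Fin c, (if i = i' then (0:ℝ) else 1) * u i'
        = u i' - (if i' = i then u i' else 0) := by
      intro i'
      by_cases h : i = i'
      · simp [h]
      · rw [if_neg h, if_neg fun hh => h hh.symm]; ring
    rw [Finset.sum_congr rfl fun i' _ => this i', Finset.sum_sub_distrib,
      Finset.sum_ite_eq' Finset.univ i u, if_pos (Finset.mem_univ i)]
  have hsum2 : ∀ i : Fin c, ∑ j, (if (i:ℕ) < b j then (1:ℝ) else 0) * t j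
      = ∑ j ∈ Finset.univ.filter (fun j => (i:ℕ) < b j), t j := by
    intro i
    rw [Finset.sum_filter]
    exact Finset.sum_congr rfl fun j _ => by split <;> ring
  -- E1
  have E1 : ∀ i : Fin c, ρ * u i ≤ (T - u i)
      + ∑ j ∈ Finset.univ.filter (fun j => (i:ℕ) < b j), t j := by
    intro i
    have := hw (Fin.castAdd z i)
    rw [hmv, Fin.sum_univ_add] at this
    simp only [hA11, hA10] at this
    rwa [hsum1 i, hsum2 i] at this
  -- E2
  have E2 : ∀ j : Fin z, ρ * t j ≤ ∑ i ∈ Finset.univ.filter (fun i : Fin c => (i:ℕ) < b j), u i := by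
    intro j
    have := hw (Fin.natAdd c j)
    rw [hmv, Fin.sum_univ_add] at this
    simp only [hA01, hA00, zero_mul, Finset.sum_const_zero, add_zero] at this
    calc ρ * t j ≤ ∑ i', (if (i':Fin c).1 < b j then (1:ℝ) else 0) * u i' := this
    _ = _ := by rw [Finset.sum_filter]; exact Finset.sum_congr rfl fun i _ => by split <;> ring
  -- cardinality
  have hcard : ∀ j : Fin z, (Finset.univ.filter (fun i : Fin c => (i:ℕ) < b j)).card = b j := by
    intro j
    have hbj : b j ≤ c := le_trans (hb j).2 (by omega)
    rw [Finset.card_filter]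
    rw [Fin.sum_univ_eq_sum_range (fun k => if k < b j then 1 else 0)]
    rw [← Finset.sum_filter]
    have : (Finset.range c).filter (fun k => k < b j) = Finset.range (b j) := by
      ext k; simp; omega
    rw [this, Finset.sum_const, Finset.card_range, smul_eq_mul, mul_one]
  -- max
  obtain ⟨i0, -, hi0⟩ := Finset.exists_max_image (Finset.univ : Finset (Fin c)) u
    ⟨⟨0, by omega⟩, Finset.mem_univ _⟩
  set W : ℝ := u i0 with hWdef
  have hW : ∀ i, u i ≤ W := fun i => hi0 i (Finset.mem_univ i)
  have hWnn : 0 ≤ W := hunn i0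
  -- ρ ≥ c - 1
  have hρc : (c : ℝ) - 1 ≤ ρ := by
    set x : Fin (c + z) → ℝ := fun k => if (k : ℕ) < c then 1 else 0 with hxdef
    have hx1 : ∀ i : Fin c, x (Fin.castAdd z i) = 1 := by
      intro i; simp only [hxdef, Fin.coe_castAdd]; rw [if_pos i.isLt]
    have hx0 : ∀ j : Fin z, x (Fin.natAdd c j) = 0 := by
      intro j; simp only [hxdef, Fin.coe_natAdd]; rw [if_neg (by omega)]
    have hray := rayleigh_aux hHerm hρ₂ x
    have hxx : x ⬝ᵥ x = (c : ℝ) := by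
      rw [dotProduct, Fin.sum_univ_add]
      simp [hx1, hx0]
    have hinner : ∀ i : Fin c, A.mulVec x (Fin.castAdd z i) = (c : ℝ) - 1 := by
      intro i
      rw [hmv, Fin.sum_univ_add]
      simp only [hx1, hx0, mul_one, mul_zero, Finset.sum_const_zero, add_zero, hA11]
      have : ∀ i' : Fin c, (if i = i' then (0:ℝ) else 1)
          = 1 - (if i' = i then (1:ℝ) else 0) := by
        intro i'
        by_cases h : i = i'
        · simp [h]
        · rw [if_neg h, if_neg fun hh => h hh.symm]; ring
      rw [Finset.sum_congr rfl fun i' _ => this i', Finset.sum_sub_distrib,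
        Finset.sum_ite_eq' Finset.univ i (fun _ => (1:ℝ)), if_pos (Finset.mem_univ i)]
      simp
    have hxAx : x ⬝ᵥ A.mulVec x = (c : ℝ) * ((c:ℝ) - 1) := by
      rw [dotProduct, Fin.sum_univ_add]
      simp only [hx1, hx0, one_mul, zero_mul, Finset.sum_const_zero, add_zero, hinner]
      simp [mul_comm]
      ring
    rw [hxAx, hxx] at hray
    have hcpos : (0:ℝ) < c := by positivity
    nlinarith
  -- D2
  have D2 : ∀ j : Fin z, ρ * t j ≤ (b j : ℝ) * W := by
    intro j
    refine le_trans (E2 j) ?_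
    calc ∑ i ∈ Finset.univ.filter (fun i : Fin c => (i:ℕ) < b j), u i
        ≤ ∑ _i ∈ Finset.univ.filter (fun i : Fin c => (i:ℕ) < b j), W :=
          Finset.sum_le_sum fun i _ => hW i
    _ = (b j : ℝ) * W := by rw [Finset.sum_const, hcard j, nsmul_eq_mul]
  -- double sum swap
  have hswap : ∑ i : Fin c, ∑ j ∈ Finset.univ.filter (fun j => (i:ℕ) < b j), t j
      = ∑ j, (b j : ℝ) * t j := by
    have h1 : ∀ i : Fin c, ∑ j ∈ Finset.univ.filter (fun j => (i:ℕ) < b j), t j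
        = ∑ j, if (i:ℕ) < b j then t j else 0 := fun i => Finset.sum_filter _ _
    rw [Finset.sum_congr rfl fun i _ => h1 i, Finset.sum_comm]
    refine Finset.sum_congr rfl fun j _ => ?_
    rw [← Finset.sum_filter, Finset.sum_const, hcard j, nsmul_eq_mul]
  -- D1
  have hsumE1 : ρ * T ≤ ((c:ℝ) * T - T) + ∑ j, (b j : ℝ) * t j := by
    calc ρ * T = ∑ i, ρ * u i := by rw [← Finset.mul_sum]
    _ ≤ ∑ i, ((T - u i) + ∑ j ∈ Finset.univ.filter (fun j => (i:ℕ) < b j), t j) :=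
        Finset.sum_le_sum fun i _ => E1 i
    _ = ((c:ℝ) * T - T) + ∑ j, (b j : ℝ) * t j := by
        rw [Finset.sum_add_distrib, Finset.sum_sub_distrib, Finset.sum_const, Finset.card_univ,
          Fintype.card_fin, nsmul_eq_mul, hswap, ← hTdef]
  have D1 : (ρ - ((c:ℝ) - 1)) * T ≤ ∑ j, (b j : ℝ) * t j := by nlinarith [hsumE1]
  -- positivity of ρ
  have hc3 : (3:ℝ) ≤ (c:ℝ) := by exact_mod_cast hc
  have hρpos : 0 < ρ := by linarith
  -- W > 0
  have hWpos : 0 < W := by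
    rcases lt_or_eq_of_le hWnn with h | h
    · exact h
    · exfalso
      have hu0 : ∀ i, u i = 0 := fun i => le_antisymm (h ▸ hW i) (hunn i)
      have ht0 : ∀ j, t j = 0 := by
        intro j
        have h2 := E2 j
        have h3 : ∑ i ∈ Finset.univ.filter (fun i : Fin c => (i:ℕ) < b j), u i = 0 :=
          Finset.sum_eq_zero fun i _ => hu0 i
        rw [h3] at h2
        nlinarith [htnn j]
      apply hv0
      funext k
      have hwk : w k = 0 := Fin.addCases (fun i => hu0 i) (fun j => ht0 j) k
      exact abs_eq_zero.mp hwk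
  -- abbreviations
  set S : ℝ := ∑ j, (b j : ℝ) with hSdef
  set F : ℝ := ∑ j, (b j : ℝ) ^ 2 with hFdef
  have hbnn : ∀ j : Fin z, (0:ℝ) ≤ (b j : ℝ) := fun j => Nat.cast_nonneg _
  have hQ : ρ * (∑ j, t j) ≤ S * W := by
    calc ρ * ∑ j, t j = ∑ j, ρ * t j := by rw [← Finset.mul_sum]
    _ ≤ ∑ j, (b j : ℝ) * W := Finset.sum_le_sum fun j _ => D2 j
    _ = S * W := by rw [← Finset.sum_mul]
  have hP : ρ * (∑ j, (b j : ℝ) * t j) ≤ F * W := by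
    calc ρ * ∑ j, (b j : ℝ) * t j = ∑ j, (b j : ℝ) * (ρ * t j) := by
          rw [Finset.mul_sum]; exact Finset.sum_congr rfl fun j _ => by ring
    _ ≤ ∑ j, (b j : ℝ) * ((b j : ℝ) * W) :=
        Finset.sum_le_sum fun j _ => mul_le_mul_of_nonneg_left (D2 j) (hbnn j)
    _ = F * W := by
        rw [hFdef, Finset.sum_mul]
        exact Finset.sum_congr rfl fun j _ => by ring
  have D3 : (ρ + 1) * W ≤ T + ∑ j, t j := by
    have h1 := E1 i0
    have h2 : ∑ j ∈ Finset.univ.filter (fun j => (i0:ℕ) < b j), t j ≤ ∑ j, t j :=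
      Finset.sum_le_sum_of_subset_of_nonneg (Finset.filter_subset _ _) fun j _ _ => htnn j
    have h3 : u i0 = W := rfl
    nlinarith [h1, h2]
  have hr : 0 ≤ ρ - ((c:ℝ) - 1) := by linarith
  have step1 : ρ * ((ρ + 1) * W) ≤ ρ * T + S * W := by
    calc ρ * ((ρ + 1) * W) ≤ ρ * (T + ∑ j, t j) := mul_le_mul_of_nonneg_left D3 hρ0
    _ = ρ * T + ρ * ∑ j, t j := by ring
    _ ≤ ρ * T + S * W := by linarith [hQ]
  have step2 : (ρ - ((c:ℝ) - 1)) * (ρ * ((ρ + 1) * W))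
      ≤ F * W + (ρ - ((c:ℝ) - 1)) * (S * W) := by
    calc (ρ - ((c:ℝ) - 1)) * (ρ * ((ρ + 1) * W))
        ≤ (ρ - ((c:ℝ) - 1)) * (ρ * T + S * W) := mul_le_mul_of_nonneg_left step1 hr
    _ = ρ * ((ρ - ((c:ℝ) - 1)) * T) + (ρ - ((c:ℝ) - 1)) * (S * W) := by ring
    _ ≤ ρ * (∑ j, (b j : ℝ) * t j) + (ρ - ((c:ℝ) - 1)) * (S * W) := by
        have := mul_le_mul_of_nonneg_left D1 hρ0
        linarith
    _ ≤ F * W + (ρ - ((c:ℝ) - 1)) * (S * W) := by linarith [hP]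
  have final : (ρ - ((c:ℝ) - 1)) * (ρ * (ρ + 1)) ≤ F + (ρ - ((c:ℝ) - 1)) * S := by
    have e1 : ((ρ - ((c:ℝ) - 1)) * (ρ * (ρ + 1))) * W
        = (ρ - ((c:ℝ) - 1)) * (ρ * ((ρ + 1) * W)) := by ring
    have e2 : (F + (ρ - ((c:ℝ) - 1)) * S) * W
        = F * W + (ρ - ((c:ℝ) - 1)) * (S * W) := by ring
    have h' : ((ρ - ((c:ℝ) - 1)) * (ρ * (ρ + 1))) * W
        ≤ (F + (ρ - ((c:ℝ) - 1)) * S) * W := by rw [e1, e2]; exact step2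
    exact le_of_mul_le_mul_right h' hWpos
  nlinarith [final]
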